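/- Let 0 < α < 1, λ ∈ ℝ, and c ≠ 0, and set y(t) = c · t^{α} E_{2α,α+1}(−λ t^{2α}). Then the boundary condition (I^{1−α}_{0+} y)(1) = 0 holds if and only if E_{2α,2}(−λ) = 0; moreover (I^{1−α}_{0+} y)(t) → 0 as t → 0⁺. In particular, λ is an eigenvalue of the Dirichlet-type problem −^cD^α_{0+} ∘ D^α_{0+} y = λ y on [0,1] with boundary conditions (I^{1−α}_{0+} y)|_{t=0} = 0 and (I^{1−α}_{0+} y)|_{t=1} = 0 among solutions of this form exactly when E_{2α,2}(−λ) = 0. -/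

import Mathlib

open MeasureTheory intervalIntegral Real Filter Topology

/-- Two-parameter Mittag–Leffler function `E_{δ,θ}(z) = ∑ z^k / Γ(δk + θ)`. -/
noncomputable def mittagLeffler (δ θ z : ℝ) : ℝ :=
  ∑' k : ℕ, z ^ k / Real.Gamma (δ * k + θ)

/-- Left Riemann–Liouville fractional integral of order `α` based at `0`:
`(I^α_{0+} f)(t) = (1/Γ(α)) ∫_0^t f(s) (t−s)^{α−1} ds`. -/
noncomputable def RLintegralLeft0 (α : ℝ) (f : ℝ → ℝ) (t : ℝ) : ℝ :=
  (1 / Real.Gamma α) * ∫ s in (0:ℝ)..t, f s * (t - s) ^ (α - 1)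


lemma betaIntegrable {a b t : ℝ} (ha : 0 < a) (hb : 0 < b) (ht : 0 < t) :
    IntervalIntegrable (fun s => s ^ (a - 1) * (t - s) ^ (b - 1)) volume 0 t := by
  have h1 : IntervalIntegrable (fun s => s ^ (a - 1) * (t - s) ^ (b - 1)) volume 0 (t / 2) := by
    apply (intervalIntegrable_rpow' (by linarith)).mul_continuousOn
    apply ContinuousOn.rpow_const (continuous_const.sub continuous_id).continuousOn
    intro s hs
    rw [Set.uIcc_of_le (by linarith)] at hs
    left
    have := hs.2
    simp only [Pi.sub_apply, id_eq]
    intro h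
    nlinarith [hs.1, hs.2]
  have h2 : IntervalIntegrable (fun s => s ^ (a - 1) * (t - s) ^ (b - 1)) volume (t / 2) t := by
    have hint : IntervalIntegrable (fun s : ℝ => (t - s) ^ (b - 1)) volume (t / 2) t := by
      have := (intervalIntegrable_rpow' (r := b - 1) (by linarith)
        (a := 0) (b := t / 2)).comp_sub_left t
      rw [show t - t/2 = t/2 by ring] at this
      simpa using this.symm
    apply hint.continuousOn_mul
    apply ContinuousOn.rpow_const continuous_id.continuousOn
    intro s hs
    rw [Set.uIcc_of_le (by linarith)] at hs
    left
    simp only [id_eq]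
    intro h
    nlinarith [hs.1, hs.2]
  exact h1.trans h2

lemma betaValue {a b t : ℝ} (ha : 0 < a) (hb : 0 < b) (ht : 0 < t) :
    ∫ s in (0:ℝ)..t, s ^ (a - 1) * (t - s) ^ (b - 1)
      = t ^ (a + b - 1) * (Real.Gamma a * Real.Gamma b / Real.Gamma (a + b)) := by
  have key : ((∫ s in (0:ℝ)..t, s ^ (a - 1) * (t - s) ^ (b - 1) : ℝ) : ℂ)
      = ((t ^ (a + b - 1) * (Real.Gamma a * Real.Gamma b / Real.Gamma (a + b)) : ℝ) : ℂ) := by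
    rw [← intervalIntegral.integral_ofReal]
    have h1 : (∫ s in (0:ℝ)..t, ((s ^ (a - 1) * (t - s) ^ (b - 1) : ℝ) : ℂ))
        = ∫ s in (0:ℝ)..t, (s : ℂ) ^ ((a : ℂ) - 1) * ((t : ℂ) - s) ^ ((b : ℂ) - 1) := by
      rw [intervalIntegral.integral_of_le ht.le, intervalIntegral.integral_of_le ht.le,
        MeasureTheory.integral_Ioc_eq_integral_Ioo, MeasureTheory.integral_Ioc_eq_integral_Ioo]
      refine setIntegral_congr_fun measurableSet_Ioo fun s hs => ?_
      rw [Complex.ofReal_mul, Complex.ofReal_cpow hs.1.le,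
        Complex.ofReal_cpow (by linarith [hs.2] : (0:ℝ) ≤ t - s)]
      push_cast
      ring
    rw [h1, Complex.betaIntegral_scaled _ _ ht]
    have hβ : Complex.betaIntegral a b
        = Complex.Gamma a * Complex.Gamma b / Complex.Gamma ((a : ℂ) + b) := by
      rw [eq_div_iff (Complex.Gamma_ne_zero_of_re_pos (by simp [ha.le, hb.le]; positivity))]
      rw [mul_comm]
      exact (Complex.Gamma_mul_Gamma_eq_betaIntegral (by simpa using ha) (by simpa using hb)).symm
    rw [hβ]
    rw [Complex.ofReal_mul, Complex.ofReal_cpow ht.le]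
    push_cast [← Complex.Gamma_ofReal]
    ring
  exact_mod_cast key

lemma summableML {δ : ℝ} (hδ : 0 < δ) (x : ℝ) :
    Summable (fun k : ℕ => x ^ k / Real.Gamma (δ * k + 2)) := by
  have hΓpos : ∀ k : ℕ, 0 < Real.Gamma (δ * k + 2) := fun k =>
    Real.Gamma_pos_of_pos (by positivity)
  have habs : Summable (fun k : ℕ => |x| ^ k / Real.Gamma (δ * k + 2)) := by
    set b : ℝ := max (|x| ^ (1 / δ)) 1 with hb
    have hb1 : (1:ℝ) ≤ b := le_max_right _ _
    have hb0 : (0:ℝ) < b := lt_of_lt_of_le one_pos hb1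
    have hxb : |x| ≤ b ^ δ := by
      calc |x| = (|x| ^ (1 / δ)) ^ δ := by
            rw [← Real.rpow_mul (abs_nonneg x), one_div_mul_cancel hδ.ne', Real.rpow_one]
        _ ≤ b ^ δ := Real.rpow_le_rpow (Real.rpow_nonneg (abs_nonneg x) _) (le_max_left _ _) hδ.le
    have q1 : (1/2 : ℝ) ^ δ < 1 := Real.rpow_lt_one (by norm_num) (by norm_num) hδ
    have q0 : (0:ℝ) ≤ (1/2 : ℝ) ^ δ := Real.rpow_nonneg (by norm_num) _
    have key : ∀ k : ℕ, |x| ^ k / Real.Gamma (δ * k + 2)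
        ≤ (Real.exp (2 * b) * 2) * ((1/2 : ℝ) ^ δ) ^ k := by
      intro k
      set n : ℕ := ⌊δ * k⌋₊ with hn
      have hfl : (n : ℝ) ≤ δ * k := Nat.floor_le (by positivity)
      have hfu : δ * k ≤ (n : ℝ) + 1 := (Nat.lt_floor_add_one _).le
      have hΓmono : Real.Gamma ((n:ℝ) + 2) ≤ Real.Gamma (δ * k + 2) :=
        Real.Gamma_strictMonoOn_Ici.monotoneOn
          (Set.mem_Ici.mpr (by linarith [Nat.cast_nonneg (α := ℝ) n]))
          (Set.mem_Ici.mpr (le_add_of_nonneg_left (by positivity))) (by linarith)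
      have hΓfact : Real.Gamma ((n:ℝ) + 2) = (Nat.factorial (n+1) : ℝ) := by
        have := Real.Gamma_nat_eq_factorial (n+1)
        rw [← this]
        push_cast
        ring_nf
      have hnum : |x| ^ k ≤ b ^ (n+1) := by
        calc |x| ^ k ≤ (b ^ δ) ^ k := pow_le_pow_left₀ (abs_nonneg x) hxb k
          _ = b ^ (δ * k) := by
              rw [← Real.rpow_natCast (b ^ δ) k, ← Real.rpow_mul hb0.le]
          _ ≤ b ^ ((n:ℝ) + 1) := Real.rpow_le_rpow_of_exponent_le hb1 hfu
          _ = b ^ (n+1) := by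
              rw [← Real.rpow_natCast b (n+1)]; push_cast; ring_nf
      have hfactb : b ^ (n+1) / ((Nat.factorial (n+1) : ℝ)) ≤ Real.exp (2*b) * (1/2:ℝ) ^ (n+1) := by
        have h2b : (2*b) ^ (n+1) / ((Nat.factorial (n+1) : ℝ)) ≤ Real.exp (2*b) :=
          Real.pow_div_factorial_le_exp (x := 2*b) (by linarith) (n+1)
        have : b ^ (n+1) = (2*b) ^ (n+1) * (1/2:ℝ) ^ (n+1) := by
          rw [← mul_pow]; ring_nf
        rw [this]
        calc (2*b) ^ (n+1) * (1/2:ℝ) ^ (n+1) / ((Nat.factorial (n+1) : ℝ))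
            = ((2*b) ^ (n+1) / ((Nat.factorial (n+1) : ℝ))) * (1/2:ℝ) ^ (n+1) := by ring
          _ ≤ Real.exp (2*b) * (1/2:ℝ) ^ (n+1) := by
              apply mul_le_mul_of_nonneg_right h2b (by positivity)
      have hgeom : ((1/2:ℝ)) ^ (n+1) ≤ ((1/2:ℝ) ^ δ) ^ k := by
        calc ((1/2:ℝ)) ^ (n+1) = (1/2:ℝ) ^ ((n:ℝ)+1) := by
              rw [← Real.rpow_natCast (1/2:ℝ) (n+1)]; push_cast; ring_nf
          _ ≤ (1/2:ℝ) ^ (δ * k) := Real.rpow_le_rpow_of_exponent_ge (by norm_num) (by norm_num) hfu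
          _ = ((1/2:ℝ) ^ δ) ^ k := by
              rw [← Real.rpow_natCast ((1/2:ℝ) ^ δ) k, ← Real.rpow_mul (by norm_num)]
      calc |x| ^ k / Real.Gamma (δ * k + 2) ≤ b ^ (n+1) / ((Nat.factorial (n+1) : ℝ)) := by
            apply div_le_div₀ (by positivity) hnum (by rw [← hΓfact]; exact Real.Gamma_pos_of_pos (by positivity)) (by rw [← hΓfact]; exact hΓmono)
        _ ≤ Real.exp (2*b) * (1/2:ℝ) ^ (n+1) := hfactb
        _ ≤ Real.exp (2*b) * ((1/2:ℝ) ^ δ) ^ k := by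
            apply mul_le_mul_of_nonneg_left hgeom (Real.exp_nonneg _)
        _ ≤ (Real.exp (2*b) * 2) * ((1/2:ℝ) ^ δ) ^ k := by
            apply mul_le_mul_of_nonneg_right _ (by positivity)
            nlinarith [Real.exp_pos (2*b)]
    apply Summable.of_nonneg_of_le (fun k => by positivity) key
    exact ((summable_geometric_of_lt_one q0 q1).mul_left _)
  apply Summable.of_abs
  exact habs.congr fun k => by rw [abs_div, abs_pow, abs_of_pos (hΓpos k)]

lemma mlBound {δ : ℝ} (hδ : 0 < δ) {z w : ℝ} (hzw : |z| ≤ w) :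
    |mittagLeffler δ 2 z| ≤ mittagLeffler δ 2 w := by
  have hΓpos : ∀ k : ℕ, 0 < Real.Gamma (δ * k + 2) := fun k =>
    Real.Gamma_pos_of_pos (by positivity)
  have habs : Summable (fun k : ℕ => |z ^ k / Real.Gamma (δ * k + 2)|) := by
    refine (summableML hδ |z|).congr fun k => ?_
    rw [abs_div, abs_pow, abs_of_pos (hΓpos k)]
  unfold mittagLeffler
  calc |∑' k : ℕ, z ^ k / Real.Gamma (δ * k + 2)|
      ≤ ∑' k : ℕ, |z ^ k / Real.Gamma (δ * k + 2)| := by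
        simpa only [Real.norm_eq_abs] using
          norm_tsum_le_tsum_norm (by simpa only [Real.norm_eq_abs] using habs :
            Summable fun k : ℕ => ‖z ^ k / Real.Gamma (δ * k + 2)‖)
    _ ≤ ∑' k : ℕ, w ^ k / Real.Gamma (δ * k + 2) := by
        refine Summable.tsum_le_tsum (fun k => ?_) habs (summableML hδ w)
        rw [abs_div, abs_pow, abs_of_pos (hΓpos k)]
        gcongr

lemma keyF {α lam c t : ℝ} (hα0 : 0 < α) (hα1 : α < 1) (ht : 0 < t) :
    (1 / Real.Gamma (1 - α)) * (∫ s in (0:ℝ)..t,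
        (c * (s ^ α * mittagLeffler (2*α) (α+1) (-lam * s ^ (2*α)))) * (t - s) ^ ((1-α) - 1))
      = c * t * mittagLeffler (2*α) 2 (-lam * t ^ (2*α)) := by
  have hB : (0:ℝ) < 1 - α := by linarith
  have hA : ∀ k : ℕ, (0:ℝ) < 2*α*k + α + 1 := fun k => by positivity
  have hΓA : ∀ k : ℕ, (0:ℝ) < Real.Gamma (2*α*k + α + 1) := fun k =>
    Real.Gamma_pos_of_pos (hA k)
  have hΓ2 : ∀ k : ℕ, (0:ℝ) < Real.Gamma (2*α*k + 2) := fun k =>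
    Real.Gamma_pos_of_pos (by positivity)
  have hΓB : (0:ℝ) < Real.Gamma (1 - α) := Real.Gamma_pos_of_pos hB
  set g : ℕ → ℝ → ℝ := fun k s =>
    (c * (-lam)^k / Real.Gamma (2*α*k + α + 1)) *
      (s ^ (2*α*(k:ℝ) + α + 1 - 1) * (t - s) ^ ((1-α) - 1)) with hg
  -- pointwise identity on Ioo
  have hpt : ∀ s ∈ Set.Ioo (0:ℝ) t,
      (c * (s ^ α * mittagLeffler (2*α) (α+1) (-lam * s ^ (2*α)))) * (t - s) ^ ((1-α) - 1)
        = ∑' k : ℕ, g k s := by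
    intro s hs
    have hterm : ∀ k : ℕ, g k s = (c * s ^ α * (t - s) ^ ((1-α) - 1)) *
        ((-lam * s ^ (2*α)) ^ k / Real.Gamma (2*α*k + α + 1)) := by
      intro k
      have e1 : s ^ (2*α*(k:ℝ) + α + 1 - 1) = s ^ (2*α*(k:ℝ)) * s ^ α := by
        rw [← Real.rpow_add hs.1]; ring_nf
      have e2 : s ^ (2*α*(k:ℝ)) = (s ^ (2*α)) ^ k := by
        rw [← Real.rpow_natCast (s ^ (2*α)) k, ← Real.rpow_mul hs.1.le]
      rw [hg]; simp only []
      rw [e1, e2]; ring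
    calc (c * (s ^ α * mittagLeffler (2*α) (α+1) (-lam * s ^ (2*α)))) * (t - s) ^ ((1-α) - 1)
        = (c * s ^ α * (t - s) ^ ((1-α) - 1)) *
            ∑' k : ℕ, (-lam * s ^ (2*α)) ^ k / Real.Gamma (2*α*k + (α + 1)) := by
          unfold mittagLeffler; ring
      _ = ∑' k : ℕ, (c * s ^ α * (t - s) ^ ((1-α) - 1)) *
            ((-lam * s ^ (2*α)) ^ k / Real.Gamma (2*α*k + (α + 1))) := (tsum_mul_left).symm
      _ = ∑' k : ℕ, g k s := tsum_congr fun k => by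
            rw [← add_assoc]; exact (hterm k).symm
  -- integrability of each g k on Ioo
  have hint : ∀ k : ℕ, IntegrableOn (g k) (Set.Ioo 0 t) volume := by
    intro k
    have h1 : IntegrableOn (fun s => s ^ (2*α*(k:ℝ) + α + 1 - 1) * (t - s) ^ ((1-α) - 1))
        (Set.Ioo 0 t) volume := by
      have := (intervalIntegrable_iff_integrableOn_Ioc_of_le ht.le).mp
        (betaIntegrable (hA k) hB ht)
      exact this.mono_set Set.Ioo_subset_Ioc_self
    exact h1.const_mul _
  -- value of beta integrals over Ioo
  have hval : ∀ k : ℕ, ∫ s in Set.Ioo (0:ℝ) t,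
      s ^ (2*α*(k:ℝ) + α + 1 - 1) * (t - s) ^ ((1-α) - 1)
        = (t * (t ^ (2*α)) ^ k) * (Real.Gamma (2*α*k + α + 1) * Real.Gamma (1-α)
            / Real.Gamma (2*α*k + 2)) := by
    intro k
    rw [← MeasureTheory.integral_Ioc_eq_integral_Ioo, ← intervalIntegral.integral_of_le ht.le,
      betaValue (hA k) hB ht]
    have e3 : (2*α*(k:ℝ) + α + 1) + (1-α) = 2*α*k + 2 := by ring
    have e4 : t ^ ((2*α*(k:ℝ) + α + 1) + (1-α) - 1) = t * (t ^ (2*α)) ^ k := by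
      rw [show (2*α*(k:ℝ) + α + 1) + (1-α) - 1 = 1 + 2*α*k by ring, Real.rpow_add ht,
        Real.rpow_one, ← Real.rpow_natCast (t ^ (2*α)) k, ← Real.rpow_mul ht.le]
    rw [e4, e3]
  -- norms of integrals, summability
  have hnorm : ∀ k : ℕ, ∫ s in Set.Ioo (0:ℝ) t, ‖g k s‖
      = (|c| * |lam|^k / Real.Gamma (2*α*k + α + 1)) *
          ((t * (t ^ (2*α)) ^ k) * (Real.Gamma (2*α*k + α + 1) * Real.Gamma (1-α)
            / Real.Gamma (2*α*k + 2))) := by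
    intro k
    have : ∀ s ∈ Set.Ioo (0:ℝ) t, ‖g k s‖
        = (|c| * |lam|^k / Real.Gamma (2*α*k + α + 1)) *
            (s ^ (2*α*(k:ℝ) + α + 1 - 1) * (t - s) ^ ((1-α) - 1)) := by
      intro s hs
      rw [hg]; simp only []
      rw [Real.norm_eq_abs, abs_mul, abs_div, abs_mul, abs_pow, abs_neg,
        abs_of_pos (hΓA k), abs_of_nonneg (mul_nonneg (Real.rpow_nonneg hs.1.le _)
          (Real.rpow_nonneg (by linarith [hs.2] : (0:ℝ) ≤ t - s) _))]
    rw [setIntegral_congr_fun measurableSet_Ioo this, MeasureTheory.integral_const_mul, hval k]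
  have hsum : Summable fun k : ℕ => ∫ s in Set.Ioo (0:ℝ) t, ‖g k s‖ := by
    refine Summable.congr ?_ fun k => (hnorm k).symm
    have base := (summableML (by positivity : (0:ℝ) < 2*α) (|lam| * t ^ (2*α))).mul_left
      (|c| * Real.Gamma (1-α) * t)
    refine base.congr fun k => ?_
    rw [mul_pow]
    field_simp
  -- exchange sum and integral
  rw [intervalIntegral.integral_of_le ht.le, MeasureTheory.integral_Ioc_eq_integral_Ioo,
    setIntegral_congr_fun measurableSet_Ioo hpt,
    ← MeasureTheory.integral_tsum_of_summable_integral_norm hint hsum]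
  -- compute the sum
  have hterm2 : ∀ k : ℕ, ∫ s in Set.Ioo (0:ℝ) t, g k s
      = (c * t * Real.Gamma (1-α)) * ((-lam * t ^ (2*α)) ^ k / Real.Gamma (2*α*k + 2)) := by
    intro k
    rw [hg]; simp only []
    rw [MeasureTheory.integral_const_mul, hval k, mul_pow]
    field_simp
  rw [tsum_congr hterm2, tsum_mul_left]
  show (1 / Real.Gamma (1 - α)) * ((c * t * Real.Gamma (1-α)) *
    ∑' k : ℕ, (-lam * t ^ (2*α)) ^ k / Real.Gamma (2*α*k + 2)) = _
  unfold mittagLeffler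
  field_simp

theorem stmt13 (α lam c : ℝ) (hα : 0 < α ∧ α < 1) (hc : c ≠ 0)
    (y : ℝ → ℝ)
    (hy : ∀ t, y t = c * (t ^ α * mittagLeffler (2 * α) (α + 1) (-lam * t ^ (2 * α)))) :
    (RLintegralLeft0 (1 - α) y 1 = 0 ↔ mittagLeffler (2 * α) 2 (-lam) = 0) ∧
      Filter.Tendsto (RLintegralLeft0 (1 - α) y)
        (nhdsWithin 0 (Set.Ioi 0)) (nhds 0) := by
  obtain ⟨hα0, hα1⟩ := hα
  have hF : ∀ t : ℝ, 0 < t → RLintegralLeft0 (1 - α) y t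
      = c * t * mittagLeffler (2*α) 2 (-lam * t ^ (2*α)) := by
    intro t ht
    unfold RLintegralLeft0
    rw [show (∫ s in (0:ℝ)..t, y s * (t - s) ^ (1 - α - 1))
        = ∫ s in (0:ℝ)..t,
            (c * (s ^ α * mittagLeffler (2*α) (α+1) (-lam * s ^ (2*α)))) * (t - s) ^ ((1-α) - 1)
        from intervalIntegral.integral_congr fun s _ => by rw [hy s]]
    exact keyF hα0 hα1 ht
  constructor
  · rw [hF 1 one_pos, Real.one_rpow, mul_one, mul_one]
    constructor
    · intro h
      rcases mul_eq_zero.mp h with h' | h'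
      · exact absurd h' hc
      · exact h'
    · intro h; rw [h, mul_zero]
  · have hIoc : Set.Ioc (0:ℝ) 1 ∈ 𝓝[>] (0:ℝ) :=
      Ioc_mem_nhdsGT_of_mem ⟨le_refl 0, one_pos⟩
    set M := mittagLeffler (2*α) 2 |lam| with hM
    refine squeeze_zero_norm' (a := fun t => |c| * M * t) ?_ ?_
    · filter_upwards [hIoc] with t ht
      rw [hF t ht.1]
      have h1 : |(-lam * t ^ (2*α))| ≤ |lam| := by
        rw [abs_mul, abs_neg]
        calc |lam| * |t ^ (2*α)| ≤ |lam| * 1 := by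
              apply mul_le_mul_of_nonneg_left _ (abs_nonneg lam)
              rw [abs_of_nonneg (Real.rpow_nonneg ht.1.le _)]
              exact Real.rpow_le_one ht.1.le ht.2 (by positivity)
          _ = |lam| := mul_one _
      have h2 := mlBound (by positivity : (0:ℝ) < 2*α) h1
      calc ‖c * t * mittagLeffler (2*α) 2 (-lam * t ^ (2*α))‖
          = |c| * t * |mittagLeffler (2*α) 2 (-lam * t ^ (2*α))| := by
            rw [Real.norm_eq_abs, abs_mul, abs_mul, abs_of_pos ht.1]
        _ ≤ |c| * t * M := mul_le_mul_of_nonneg_left h2 (mul_nonneg (abs_nonneg c) ht.1.le)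
        _ = |c| * M * t := by ring
    · have : Filter.Tendsto (fun t : ℝ => |c| * M * t) (nhds 0) (nhds (|c| * M * 0)) :=
        (continuous_const.mul continuous_id).tendsto 0
      simpa using this.mono_left nhdsWithin_le_nhds
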